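/- (Average relay power formula, eq. (16).) Let P_{S1}, P_{S2}, δ₁, δ₂, ρ > 0 satisfy the balanced-rate condition P_{S1}/δ₁ = P_{S2}/δ₂, and write λ = λ(ρ). Then the average power of the truncated optimal policy satisfies E[ max{A(X,Y),B(X,Y)} · 1{(X,Y) ∈ M(ρ)} ] = ∫_λ^∞ ∫_{δ₁(1+(P_{S2}+ρ)y)/(P_{S1}(ρy−δ₁))}^{y} (δ₁(1+P_{S1}x+P_{S2}y)/(y(P_{S1}x−δ₁))) f_X(x) f_Y(y) dx dy + ∫_λ^∞ ∫_{δ₂(1+(P_{S1}+ρ)x)/(P_{S2}(ρx−δ₂))}^{x} (δ₂(1+P_{S1}x+P_{S2}y)/(x(P_{S2}y−δ₂))) f_X(x) f_Y(y) dy dx. -/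

import Mathlib

open MeasureTheory ProbabilityTheory Set
open scoped NNReal ENNReal

namespace RelayAux

lemma expMeasure_withDensity (r : ℝ) :
    expMeasure r = MeasureTheory.volume.withDensity
      (fun x => ((Real.toNNReal (exponentialPDFReal r x) : ℝ≥0) : ℝ≥0∞)) := rfl

lemma integral_expMeasure_eq (r : ℝ) (hr : 0 < r) (g : ℝ → ℝ) :
    ∫ x, g x ∂(expMeasure r) = ∫ x, exponentialPDFReal r x * g x := by
  rw [expMeasure_withDensity r, integral_withDensity_eq_integral_smul
    (f := fun x => (exponentialPDFReal r x).toNNReal)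
    (measurable_real_toNNReal.comp (measurable_exponentialPDFReal r)) g]
  refine integral_congr_ae (Filter.Eventually.of_forall fun x => ?_)
  simp [NNReal.smul_def, Real.coe_toNNReal _ (exponentialPDFReal_nonneg hr x)]

lemma setIntegral_expMeasure_eq (r : ℝ) (hr : 0 < r) (g : ℝ → ℝ) {s : Set ℝ}
    (hs : MeasurableSet s) :
    ∫ x in s, g x ∂(expMeasure r) = ∫ x in s, exponentialPDFReal r x * g x := by
  rw [expMeasure_withDensity r, setIntegral_withDensity_eq_setIntegral_smul
    (f := fun x => (exponentialPDFReal r x).toNNReal)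
    (measurable_real_toNNReal.comp (measurable_exponentialPDFReal r)) g hs]
  refine integral_congr_ae (Filter.Eventually.of_forall fun x => ?_)
  simp [NNReal.smul_def, Real.coe_toNNReal _ (exponentialPDFReal_nonneg hr x)]

lemma expPDFReal_eq (r x : ℝ) (hx : 0 ≤ x) :
    exponentialPDFReal r x = r * Real.exp (-(r * x)) := by
  rw [exponentialPDFReal, gammaPDFReal, if_pos hx]
  norm_num [Real.Gamma_one, Real.rpow_one]

lemma expMeasure_singleton (r : ℝ) (y : ℝ) : expMeasure r {y} = 0 := by
  rw [expMeasure_withDensity r]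
  exact (withDensity_absolutelyContinuous _ _) (measure_singleton y)

lemma quad_iff (c s ρ L y : ℝ) (hc : 0 < c) (hsp : 0 < s) (hρ : 0 < ρ)
    (hL : L = (c * s + Real.sqrt (c ^ 2 * s ^ 2 + 4 * ρ * c)) / (2 * ρ)) (hy : 0 < y) :
    (0 ≤ ρ * y ^ 2 - c * s * y - c ↔ L ≤ y) ∧
      (0 < ρ * y ^ 2 - c * s * y - c ↔ L < y) := by
  set r := Real.sqrt (c ^ 2 * s ^ 2 + 4 * ρ * c) with hrdef
  have hr2 : r ^ 2 = c ^ 2 * s ^ 2 + 4 * ρ * c := Real.sq_sqrt (by positivity)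
  have hr0 : 0 ≤ r := Real.sqrt_nonneg _
  have hrcs : c * s ≤ r := by
    rw [hrdef]
    exact (Real.le_sqrt (by positivity) (by positivity)).mpr (by nlinarith)
  constructor
  · constructor
    · intro h
      have hcs : c * s < ρ * y := by nlinarith
      have h3 : c ^ 2 * s ^ 2 + 4 * ρ * c ≤ (2 * ρ * y - c * s) ^ 2 := by nlinarith
      have h2 : r ≤ 2 * ρ * y - c * s := by
        calc r ≤ Real.sqrt ((2 * ρ * y - c * s) ^ 2) := Real.sqrt_le_sqrt h3
        _ = 2 * ρ * y - c * s := Real.sqrt_sq (by nlinarith)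
      rw [hL, div_le_iff₀ (by positivity)]
      linarith
    · intro h
      rw [hL, div_le_iff₀ (by positivity)] at h
      have h2 : r ≤ 2 * ρ * y - c * s := by linarith
      nlinarith [mul_le_mul h2 h2 hr0 (by linarith : (0:ℝ) ≤ 2 * ρ * y - c * s)]
  · constructor
    · intro h
      have hcs : c * s < ρ * y := by nlinarith
      have h3 : c ^ 2 * s ^ 2 + 4 * ρ * c < (2 * ρ * y - c * s) ^ 2 := by nlinarith
      have h2 : r < 2 * ρ * y - c * s := by
        calc r < Real.sqrt ((2 * ρ * y - c * s) ^ 2) := Real.sqrt_lt_sqrt (by positivity) h3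
        _ = 2 * ρ * y - c * s := Real.sqrt_sq (by nlinarith)
      rw [hL, div_lt_iff₀ (by positivity)]
      linarith
    · intro h
      rw [hL, div_lt_iff₀ (by positivity)] at h
      have h2 : r < 2 * ρ * y - c * s := by linarith
      nlinarith [mul_le_mul h2.le h2.le hr0 (by linarith : (0:ℝ) ≤ 2 * ρ * y - c * s)]

lemma ratio_le_iff (P Q d r x y : ℝ) (hP : 0 < P) (hQ : 0 < Q) (hd : 0 < d) (hr : 0 < r)
    (hy : 0 < y) (hx : d < P * x) :
    d * (1 + P * x + Q * y) / (y * (P * x - d)) ≤ r ↔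
      d < r * y ∧ d * (1 + (Q + r) * y) / (P * (r * y - d)) ≤ x := by
  have hx0 : 0 < x := by nlinarith
  have hden : 0 < y * (P * x - d) := by nlinarith
  rw [div_le_iff₀ hden]
  constructor
  · intro h
    have hkey : d * (1 + (Q + r) * y) ≤ P * x * (r * y - d) := by nlinarith
    have hpos : 0 < d * (1 + (Q + r) * y) := mul_pos hd (by nlinarith [mul_pos (add_pos hQ hr) hy])
    have hry : d < r * y := by
      by_contra hcon
      push_neg at hcon
      nlinarith [mul_nonneg (hd.trans hx).le (sub_nonneg.mpr hcon)]
    refine ⟨hry, ?_⟩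
    rw [div_le_iff₀ (by nlinarith)]
    nlinarith
  · rintro ⟨hry, h⟩
    rw [div_le_iff₀ (by nlinarith)] at h
    nlinarith

lemma ratio_cmp (P Q d e x y : ℝ) (hP : 0 < P) (hQ : 0 < Q) (hd : 0 < d) (he : 0 < e)
    (hx : 0 < x) (hy : 0 < y) (hdx : d < P * x) (hey : e < Q * y)
    (hbal : P * e = Q * d) (hxy : x ≤ y) :
    e * (1 + P * x + Q * y) / (x * (Q * y - e)) ≤
      d * (1 + P * x + Q * y) / (y * (P * x - d)) := by
  rw [div_le_div_iff₀ (by nlinarith) (by nlinarith)]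
  have h0 : d * (1 + P * x + Q * y) * (x * (Q * y - e))
      - e * (1 + P * x + Q * y) * (y * (P * x - d))
      = (1 + P * x + Q * y) * (d * e) * (y - x) := by
    linear_combination (-(1 + P * x + Q * y) * x * y) * hbal
  nlinarith [mul_nonneg (mul_nonneg (by positivity : (0:ℝ) ≤ 1 + P * x + Q * y)
    (by positivity : (0:ℝ) ≤ d * e)) (sub_nonneg.mpr hxy)]

lemma glb_gt (P Q d r y : ℝ) (hP : 0 < P) (hQ : 0 < Q) (hd : 0 < d) (hr : 0 < r)
    (hry : d < r * y) :
    d / P < d * (1 + (Q + r) * y) / (P * (r * y - d)) := by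
  have hy : 0 < y := by nlinarith
  rw [div_lt_div_iff₀ hP (by nlinarith)]
  nlinarith [mul_pos (mul_pos hd hP) (show (0:ℝ) < 1 + Q * y + d by positivity)]

end RelayAux

open MeasureTheory ProbabilityTheory Set

set_option maxHeartbeats 2000000 in
theorem average_relay_power_formula
    {Ω : Type*} [MeasurableSpace Ω] (μ : Measure Ω) [IsProbabilityMeasure μ]
    (X Y : Ω → ℝ) (hXm : Measurable X) (hYm : Measurable Y)
    (ΩX ΩY : ℝ) (hΩX : 0 < ΩX) (hΩY : 0 < ΩY)
    (hX : Measure.map X μ = expMeasure (1 / ΩX))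
    (hY : Measure.map Y μ = expMeasure (1 / ΩY))
    (hindep : IndepFun X Y μ)
    (fX fY : ℝ → ℝ)
    (hfX : fX = fun z => (1 / ΩX) * Real.exp (-z / ΩX))
    (hfY : fY = fun z => (1 / ΩY) * Real.exp (-z / ΩY))
    (PS1 PS2 δ1 δ2 ρ : ℝ)
    (hPS1 : 0 < PS1) (hPS2 : 0 < PS2) (hδ1 : 0 < δ1) (hδ2 : 0 < δ2) (hρ : 0 < ρ)
    (hbal : PS1 / δ1 = PS2 / δ2)
    (lam : ℝ)
    (hlam : lam = (δ2 * (PS1 + PS2 + ρ) / (2 * PS2 * ρ)) *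
      (1 + Real.sqrt (1 + 4 * PS2 * ρ / (δ2 * (PS1 + PS2 + ρ) ^ 2))))
    (Mρ : Set (ℝ × ℝ))
    (hMρ : Mρ = {p : ℝ × ℝ | 0 < p.1 ∧ 0 < p.2 ∧ PS1 * p.1 > δ1 ∧ PS2 * p.2 > δ2 ∧
        max (δ1 * (1 + PS1 * p.1 + PS2 * p.2) / (p.2 * (PS1 * p.1 - δ1)))
            (δ2 * (1 + PS1 * p.1 + PS2 * p.2) / (p.1 * (PS2 * p.2 - δ2))) ≤ ρ}) :
    (∫ ω, Set.indicator Mρ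
        (fun p => max (δ1 * (1 + PS1 * p.1 + PS2 * p.2) / (p.2 * (PS1 * p.1 - δ1)))
                      (δ2 * (1 + PS1 * p.1 + PS2 * p.2) / (p.1 * (PS2 * p.2 - δ2))))
        (X ω, Y ω) ∂μ)
      = (∫ y in Ioi lam,
            ∫ x in (δ1 * (1 + (PS2 + ρ) * y) / (PS1 * (ρ * y - δ1)))..y,
              (δ1 * (1 + PS1 * x + PS2 * y) / (y * (PS1 * x - δ1))) * fX x * fY y)
        + ∫ x in Ioi lam,
            ∫ y in (δ2 * (1 + (PS1 + ρ) * x) / (PS2 * (ρ * x - δ2)))..x,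
              (δ2 * (1 + PS1 * x + PS2 * y) / (x * (PS2 * y - δ2))) * fX x * fY y := by
  have hrX : (0:ℝ) < 1 / ΩX := by positivity
  have hrY : (0:ℝ) < 1 / ΩY := by positivity
  haveI hPm1 : IsProbabilityMeasure (expMeasure (1 / ΩX)) :=
    isProbabilityMeasure_expMeasure hrX
  haveI hPm2 : IsProbabilityMeasure (expMeasure (1 / ΩY)) :=
    isProbabilityMeasure_expMeasure hrY
  have hbal'' : PS1 * δ2 = PS2 * δ1 := (div_eq_div_iff hδ1.ne' hδ2.ne').mp hbal
  obtain ⟨c, hc, hcP1, hcP2⟩ : ∃ c : ℝ, 0 < c ∧ PS1 * c = δ1 ∧ PS2 * c = δ2 :=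
    ⟨δ2 / PS2, by positivity, by field_simp; linarith, by field_simp⟩
  have hsSpos : (0:ℝ) < PS1 + PS2 + ρ := by positivity
  have hlam' : lam = (c * (PS1 + PS2 + ρ) +
      Real.sqrt (c ^ 2 * (PS1 + PS2 + ρ) ^ 2 + 4 * ρ * c)) / (2 * ρ) := by
    have h1 : 1 + 4 * PS2 * ρ / (δ2 * (PS1 + PS2 + ρ) ^ 2)
        = (c ^ 2 * (PS1 + PS2 + ρ) ^ 2 + 4 * ρ * c) / (c * (PS1 + PS2 + ρ)) ^ 2 := by
      rw [← hcP2]; field_simp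
    have h2 : Real.sqrt (1 + 4 * PS2 * ρ / (δ2 * (PS1 + PS2 + ρ) ^ 2))
        = Real.sqrt (c ^ 2 * (PS1 + PS2 + ρ) ^ 2 + 4 * ρ * c) / (c * (PS1 + PS2 + ρ)) := by
      rw [h1, Real.sqrt_div (by positivity), Real.sqrt_sq (by positivity)]
    rw [hlam, h2, ← hcP2]
    have hpos : 0 < c * (PS1 + PS2 + ρ) := by positivity
    field_simp
  have hquad := fun (y : ℝ) (hy : 0 < y) =>
    RelayAux.quad_iff c (PS1 + PS2 + ρ) ρ lam y hc hsSpos hρ hlam' hy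
  have hlam0 : 0 < lam := by
    rw [hlam']; positivity
  have hδ1lam : δ1 < ρ * lam := by
    by_contra hcon
    push_neg at hcon
    have hy : (0:ℝ) < δ1 / ρ := by positivity
    have hlamle : lam ≤ δ1 / ρ := by
      rw [le_div_iff₀ hρ]; linarith
    have h := ((hquad (δ1 / ρ) hy).1).mpr hlamle
    have key : ρ * (δ1 / ρ) ^ 2 - c * (PS1 + PS2 + ρ) * (δ1 / ρ) - c
        = (δ1 ^ 2 - c * (PS1 + PS2 + ρ) * δ1 - c * ρ) / ρ := by
      field_simp
    rw [key, le_div_iff₀ hρ] at h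
    have h3 : PS1 * c * δ1 = δ1 * δ1 := by rw [hcP1]
    linarith [h, h3, mul_pos (mul_pos hc hPS2) hδ1, mul_pos (mul_pos hc hρ) hδ1, mul_pos hc hρ]
  have hδ2lam : δ2 < ρ * lam := by
    by_contra hcon
    push_neg at hcon
    have hy : (0:ℝ) < δ2 / ρ := by positivity
    have hlamle : lam ≤ δ2 / ρ := by
      rw [le_div_iff₀ hρ]; linarith
    have h := ((hquad (δ2 / ρ) hy).1).mpr hlamle
    have key : ρ * (δ2 / ρ) ^ 2 - c * (PS1 + PS2 + ρ) * (δ2 / ρ) - c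
        = (δ2 ^ 2 - c * (PS1 + PS2 + ρ) * δ2 - c * ρ) / ρ := by
      field_simp
    rw [key, le_div_iff₀ hρ] at h
    have h3 : PS2 * c * δ2 = δ2 * δ2 := by rw [hcP2]
    linarith [h, h3, mul_pos (mul_pos hc hPS1) hδ2, mul_pos (mul_pos hc hρ) hδ2, mul_pos hc hρ]
  -- abbreviations
  set A : ℝ × ℝ → ℝ :=
    fun p => δ1 * (1 + PS1 * p.1 + PS2 * p.2) / (p.2 * (PS1 * p.1 - δ1)) with hAdef
  set B : ℝ × ℝ → ℝ :=
    fun p => δ2 * (1 + PS1 * p.1 + PS2 * p.2) / (p.1 * (PS2 * p.2 - δ2)) with hBdef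
  set g1 : ℝ → ℝ :=
    fun y => δ1 * (1 + (PS2 + ρ) * y) / (PS1 * (ρ * y - δ1)) with hg1def
  set g2 : ℝ → ℝ :=
    fun x => δ2 * (1 + (PS1 + ρ) * x) / (PS2 * (ρ * x - δ2)) with hg2def
  set M1 : Set (ℝ × ℝ) := Mρ ∩ {p : ℝ × ℝ | p.1 ≤ p.2} with hM1def
  set M2 : Set (ℝ × ℝ) := Mρ ∩ {p : ℝ × ℝ | p.2 < p.1} with hM2def
  -- pointwise characterizations
  have hA_iff : ∀ x y : ℝ, 0 < y → δ1 < PS1 * x →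
      (A (x, y) ≤ ρ ↔ (δ1 < ρ * y ∧ g1 y ≤ x)) := by
    intro x y hy hx
    exact RelayAux.ratio_le_iff PS1 PS2 δ1 ρ x y hPS1 hPS2 hδ1 hρ hy hx
  have hB_iff : ∀ x y : ℝ, 0 < x → δ2 < PS2 * y →
      (B (x, y) ≤ ρ ↔ (δ2 < ρ * x ∧ g2 x ≤ y)) := by
    intro x y hx hy
    have h := RelayAux.ratio_le_iff PS2 PS1 δ2 ρ y x hPS2 hPS1 hδ2 hρ hx hy
    rw [show 1 + PS2 * y + PS1 * x = 1 + PS1 * x + PS2 * y from by ring] at h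
    exact h
  have hBleA : ∀ x y : ℝ, 0 < x → 0 < y → δ1 < PS1 * x → δ2 < PS2 * y → x ≤ y →
      B (x, y) ≤ A (x, y) := by
    intro x y hx hy hdx hey hxy
    exact RelayAux.ratio_cmp PS1 PS2 δ1 δ2 x y hPS1 hPS2 hδ1 hδ2 hx hy hdx hey hbal'' hxy
  have hAleB : ∀ x y : ℝ, 0 < x → 0 < y → δ1 < PS1 * x → δ2 < PS2 * y → y ≤ x →
      A (x, y) ≤ B (x, y) := by
    intro x y hx hy hdx hey hyx
    have h := RelayAux.ratio_cmp PS2 PS1 δ2 δ1 y x hPS2 hPS1 hδ2 hδ1 hy hx hey hdx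
      (by linarith) hyx
    rw [show 1 + PS2 * y + PS1 * x = 1 + PS1 * x + PS2 * y from by ring] at h
    exact h
  -- g1/g2 bounds
  have hg1pos : ∀ y : ℝ, δ1 < ρ * y → δ1 / PS1 < g1 y := by
    intro y hry
    exact RelayAux.glb_gt PS1 PS2 δ1 ρ y hPS1 hPS2 hδ1 hρ hry
  have hg2pos : ∀ x : ℝ, δ2 < ρ * x → δ2 / PS2 < g2 x := by
    intro x hrx
    exact RelayAux.glb_gt PS2 PS1 δ2 ρ x hPS2 hPS1 hδ2 hρ hrx
  have hquadeq1 : ∀ y : ℝ, y * (PS1 * (ρ * y - δ1)) - δ1 * (1 + (PS2 + ρ) * y)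
      = PS1 * (ρ * y ^ 2 - c * (PS1 + PS2 + ρ) * y - c) := by
    intro y
    linear_combination ((PS1 + PS2 + ρ) * y + 1) * hcP1
  have hquadeq2 : ∀ x : ℝ, x * (PS2 * (ρ * x - δ2)) - δ2 * (1 + (PS1 + ρ) * x)
      = PS2 * (ρ * x ^ 2 - c * (PS1 + PS2 + ρ) * x - c) := by
    intro x
    linear_combination ((PS1 + PS2 + ρ) * x + 1) * hcP2
  have hg1le : ∀ y : ℝ, δ1 < ρ * y → lam ≤ y → g1 y ≤ y := by
    intro y hry hlamy
    have hy0 : 0 < y := by nlinarith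
    have hq := ((hquad y hy0).1).mpr hlamy
    rw [hg1def]
    rw [div_le_iff₀ (by nlinarith : (0:ℝ) < PS1 * (ρ * y - δ1))]
    nlinarith [hquadeq1 y, mul_nonneg hPS1.le hq]
  have hg1ge : ∀ y : ℝ, δ1 < ρ * y → y ≤ lam → y ≤ g1 y := by
    intro y hry hylam
    have hy0 : 0 < y := by nlinarith
    have hq : ¬ (0 < ρ * y ^ 2 - c * (PS1 + PS2 + ρ) * y - c) := by
      intro hq
      exact absurd (((hquad y hy0).2).mp hq) (not_lt.mpr hylam)
    push_neg at hq
    rw [hg1def]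
    rw [le_div_iff₀ (by nlinarith : (0:ℝ) < PS1 * (ρ * y - δ1))]
    nlinarith [hquadeq1 y, mul_nonneg hPS1.le (neg_nonneg.mpr hq)]
  have hg2le : ∀ x : ℝ, δ2 < ρ * x → lam ≤ x → g2 x ≤ x := by
    intro x hrx hlamx
    have hx0 : 0 < x := by nlinarith
    have hq := ((hquad x hx0).1).mpr hlamx
    rw [hg2def]
    rw [div_le_iff₀ (by nlinarith : (0:ℝ) < PS2 * (ρ * x - δ2))]
    nlinarith [hquadeq2 x, mul_nonneg hPS2.le hq]
  have hg2ge : ∀ x : ℝ, δ2 < ρ * x → x ≤ lam → x ≤ g2 x := by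
    intro x hrx hxlam
    have hx0 : 0 < x := by nlinarith
    have hq : ¬ (0 < ρ * x ^ 2 - c * (PS1 + PS2 + ρ) * x - c) := by
      intro hq
      exact absurd (((hquad x hx0).2).mp hq) (not_lt.mpr hxlam)
    push_neg at hq
    rw [hg2def]
    rw [le_div_iff₀ (by nlinarith : (0:ℝ) < PS2 * (ρ * x - δ2))]
    nlinarith [hquadeq2 x, mul_nonneg hPS2.le (neg_nonneg.mpr hq)]
  -- membership characterizations
  have hmem1 : ∀ x y : ℝ, ((x, y) ∈ M1 ↔ (δ1 < ρ * y ∧ g1 y ≤ x ∧ x ≤ y)) := by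
    intro x y
    constructor
    · rintro ⟨hp, hxy⟩
      rw [hMρ] at hp
      simp only [Set.mem_setOf_eq] at hp
      obtain ⟨hx0, hy0, hPx, hPy, hmax⟩ := hp
      have hA1 : A (x, y) ≤ ρ := le_trans (le_max_left _ _) hmax
      have h := (hA_iff x y hy0 hPx).mp hA1
      exact ⟨h.1, h.2, hxy⟩
    · rintro ⟨hry, hgx, hxy⟩
      have hgc := hg1pos y hry
      have hcx : δ1 / PS1 < x := lt_of_lt_of_le hgc hgx
      have hPx : δ1 < PS1 * x := by
        rw [div_lt_iff₀ hPS1] at hcx; linarith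
      have hx0 : 0 < x := lt_trans (by positivity) hcx
      have hy0 : 0 < y := lt_of_lt_of_le hx0 hxy
      have hcy : c < y := by
        have h1 : c < x := by
          rw [div_lt_iff₀ hPS1] at hcx
          nlinarith
        linarith
      have hPy : δ2 < PS2 * y := by nlinarith
      have hA1 : A (x, y) ≤ ρ := (hA_iff x y hy0 hPx).mpr ⟨hry, hgx⟩
      have hBA := hBleA x y hx0 hy0 hPx hPy hxy
      refine ⟨?_, hxy⟩
      rw [hMρ]
      exact ⟨hx0, hy0, hPx, hPy, max_le hA1 (hBA.trans hA1)⟩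
  have hmem2 : ∀ x y : ℝ, ((x, y) ∈ M2 ↔ (δ2 < ρ * x ∧ g2 x ≤ y ∧ y < x)) := by
    intro x y
    constructor
    · rintro ⟨hp, hyx⟩
      rw [hMρ] at hp
      simp only [Set.mem_setOf_eq] at hp
      obtain ⟨hx0, hy0, hPx, hPy, hmax⟩ := hp
      have hB1 : B (x, y) ≤ ρ := le_trans (le_max_right _ _) hmax
      have h := (hB_iff x y hx0 hPy).mp hB1
      exact ⟨h.1, h.2, hyx⟩
    · rintro ⟨hrx, hgy, hyx⟩
      have hgc := hg2pos x hrx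
      have hcy : δ2 / PS2 < y := lt_of_lt_of_le hgc hgy
      have hPy : δ2 < PS2 * y := by
        rw [div_lt_iff₀ hPS2] at hcy; linarith
      have hy0 : 0 < y := lt_trans (by positivity) hcy
      have hx0 : 0 < x := lt_trans hy0 hyx
      have hcx : c < x := by
        have h1 : c < y := by
          rw [div_lt_iff₀ hPS2] at hcy
          nlinarith
        linarith
      have hPx : δ1 < PS1 * x := by nlinarith
      have hB1 : B (x, y) ≤ ρ := (hB_iff x y hx0 hPy).mpr ⟨hrx, hgy⟩
      have hAB := hAleB x y hx0 hy0 hPx hPy hyx.le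
      refine ⟨?_, hyx⟩
      rw [hMρ]
      exact ⟨hx0, hy0, hPx, hPy, max_le (hAB.trans hB1) hB1⟩
  -- measurability
  have hAm : Measurable A := by
    rw [hAdef]
    exact (measurable_const.mul ((measurable_const.add
      (measurable_const.mul measurable_fst)).add
      (measurable_const.mul measurable_snd))).div
      (measurable_snd.mul ((measurable_const.mul measurable_fst).sub measurable_const))
  have hBm : Measurable B := by
    rw [hBdef]
    exact (measurable_const.mul ((measurable_const.add
      (measurable_const.mul measurable_fst)).add
      (measurable_const.mul measurable_snd))).div
      (measurable_fst.mul ((measurable_const.mul measurable_snd).sub measurable_const))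
  have hMρm : MeasurableSet Mρ := by
    rw [hMρ]
    simp only [gt_iff_lt, Set.setOf_and]
    exact (measurableSet_lt measurable_const measurable_fst).inter
      ((measurableSet_lt measurable_const measurable_snd).inter
      ((measurableSet_lt measurable_const (measurable_const.mul measurable_fst)).inter
      ((measurableSet_lt measurable_const (measurable_const.mul measurable_snd)).inter
        (measurableSet_le (hAm.max hBm) measurable_const))))
  have hM1m : MeasurableSet M1 := by
    rw [hM1def]; exact hMρm.inter (measurableSet_le measurable_fst measurable_snd)
  have hM2m : MeasurableSet M2 := by
    rw [hM2def]; exact hMρm.inter (measurableSet_lt measurable_snd measurable_fst)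
  -- bounds on A, B over the region
  have hb1 : ∀ p : ℝ × ℝ, p ∈ Mρ → (0 ≤ A p ∧ 0 ≤ B p ∧ A p ≤ ρ ∧ B p ≤ ρ) := by
    intro p hp
    rw [hMρ] at hp
    simp only [Set.mem_setOf_eq] at hp
    obtain ⟨hx0, hy0, hPx, hPy, hmax⟩ := hp
    have hnum1 : 0 ≤ δ1 * (1 + PS1 * p.1 + PS2 * p.2) := by
      nlinarith [mul_pos hPS1 hx0, mul_pos hPS2 hy0]
    have hnum2 : 0 ≤ δ2 * (1 + PS1 * p.1 + PS2 * p.2) := by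
      nlinarith [mul_pos hPS1 hx0, mul_pos hPS2 hy0]
    exact ⟨div_nonneg hnum1 (by nlinarith), div_nonneg hnum2 (by nlinarith),
      le_trans (le_max_left _ _) hmax, le_trans (le_max_right _ _) hmax⟩
  have hbound1 : ∀ p, ‖M1.indicator A p‖ ≤ ρ := by
    intro p
    rw [Real.norm_eq_abs]
    by_cases h : p ∈ M1
    · rw [Set.indicator_of_mem h]
      obtain ⟨h0, -, hAρ, -⟩ := hb1 p h.1
      rw [abs_of_nonneg h0]; exact hAρ
    · rw [Set.indicator_of_notMem h, abs_zero]; exact hρ.le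
  have hbound2 : ∀ p, ‖M2.indicator B p‖ ≤ ρ := by
    intro p
    rw [Real.norm_eq_abs]
    by_cases h : p ∈ M2
    · rw [Set.indicator_of_mem h]
      obtain ⟨-, h0, -, hBρ⟩ := hb1 p h.1
      rw [abs_of_nonneg h0]; exact hBρ
    · rw [Set.indicator_of_notMem h, abs_zero]; exact hρ.le
  have hint1 : Integrable (M1.indicator A)
      ((expMeasure (1/ΩX)).prod (expMeasure (1/ΩY))) := by
    refine Integrable.mono' (integrable_const ρ)
      ((hAm.indicator hM1m).aestronglyMeasurable) ?_
    exact Filter.Eventually.of_forall hbound1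
  have hint2 : Integrable (M2.indicator B)
      ((expMeasure (1/ΩX)).prod (expMeasure (1/ΩY))) := by
    refine Integrable.mono' (integrable_const ρ)
      ((hBm.indicator hM2m).aestronglyMeasurable) ?_
    exact Filter.Eventually.of_forall hbound2
  -- reduce the LHS to an integral over the product measure
  have hmapXY : Measure.map (fun ω => (X ω, Y ω)) μ
      = (expMeasure (1/ΩX)).prod (expMeasure (1/ΩY)) := by
    rw [← hX, ← hY]
    exact (ProbabilityTheory.indepFun_iff_map_prod_eq_prod_map_map
      hXm.aemeasurable hYm.aemeasurable).mp hindep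
  have hLHS : (∫ p, Mρ.indicator (fun p => max (A p) (B p)) p
        ∂((expMeasure (1/ΩX)).prod (expMeasure (1/ΩY))))
      = ∫ ω, Mρ.indicator (fun p => max (A p) (B p)) (X ω, Y ω) ∂μ := by
    rw [← hmapXY]
    exact integral_map (hXm.prodMk hYm).aemeasurable
      ((hAm.max hBm).indicator hMρm).aestronglyMeasurable
  -- split the indicator
  have hsplit : ∀ p : ℝ × ℝ, Mρ.indicator (fun p => max (A p) (B p)) p
      = M1.indicator A p + M2.indicator B p := by
    intro p
    by_cases hp : p ∈ Mρ
    · have hp' := hp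
      rw [hMρ] at hp'
      simp only [Set.mem_setOf_eq] at hp'
      obtain ⟨hx0, hy0, hPx, hPy, hmax⟩ := hp'
      rw [Set.indicator_of_mem hp]
      by_cases hxy : p.1 ≤ p.2
      · have hp1 : p ∈ M1 := ⟨hp, hxy⟩
        have hp2 : p ∉ M2 := fun h => absurd h.2 (not_lt.mpr hxy)
        rw [Set.indicator_of_mem hp1, Set.indicator_of_notMem hp2, add_zero]
        show max (A p) (B p) = A p
        exact max_eq_left (hBleA p.1 p.2 hx0 hy0 hPx hPy hxy)
      · push_neg at hxy
        have hp1 : p ∉ M1 := fun h => absurd h.2 (not_le.mpr hxy)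
        have hp2 : p ∈ M2 := ⟨hp, hxy⟩
        rw [Set.indicator_of_notMem hp1, Set.indicator_of_mem hp2, zero_add]
        show max (A p) (B p) = B p
        exact max_eq_right (hAleB p.1 p.2 hx0 hy0 hPx hPy hxy.le)
    · have hp1 : p ∉ M1 := fun h => hp h.1
      have hp2 : p ∉ M2 := fun h => hp h.1
      rw [Set.indicator_of_notMem hp, Set.indicator_of_notMem hp1,
        Set.indicator_of_notMem hp2, add_zero]
  -- first term
  have hfun1 : ∀ y : ℝ, δ1 < ρ * y → (fun x => M1.indicator A (x, y))
      = (Icc (g1 y) y).indicator (fun x => A (x, y)) := by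
    intro y hry
    funext x
    have hiff : (x, y) ∈ M1 ↔ x ∈ Icc (g1 y) y := by
      rw [hmem1 x y, mem_Icc]
      exact ⟨fun h => ⟨h.2.1, h.2.2⟩, fun h => ⟨hry, h.1, h.2⟩⟩
    by_cases h : x ∈ Icc (g1 y) y
    · rw [Set.indicator_of_mem (hiff.mpr h), Set.indicator_of_mem h]
    · rw [Set.indicator_of_notMem (fun hc => h (hiff.mp hc)),
        Set.indicator_of_notMem h]
  have hterm1 : (∫ p, M1.indicator A p ∂((expMeasure (1/ΩX)).prod (expMeasure (1/ΩY))))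
      = ∫ y in Ioi lam, ∫ x in (δ1 * (1 + (PS2 + ρ) * y) / (PS1 * (ρ * y - δ1)))..y,
          (δ1 * (1 + PS1 * x + PS2 * y) / (y * (PS1 * x - δ1))) * fX x * fY y := by
    rw [MeasureTheory.integral_prod_symm _ hint1,
      RelayAux.integral_expMeasure_eq _ hrY]
    have hzero : ∀ y : ℝ, y ≤ lam →
        (∫ x, M1.indicator A (x, y) ∂(expMeasure (1/ΩX))) = 0 := by
      intro y hylam
      by_cases hry : δ1 < ρ * y
      · rw [hfun1 y hry]
        have hsub : Icc (g1 y) y ⊆ {y} := by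
          intro x hx
          exact mem_singleton_iff.mpr (le_antisymm hx.2 ((hg1ge y hry hylam).trans hx.1))
        have hnull : (expMeasure (1/ΩX)) (Icc (g1 y) y) = 0 :=
          measure_mono_null hsub (RelayAux.expMeasure_singleton _ y)
        rw [integral_indicator measurableSet_Icc, Measure.restrict_eq_zero.mpr hnull,
          integral_zero_measure]
      · have hfun0 : (fun x => M1.indicator A (x, y)) = fun _ => (0:ℝ) := by
          funext x
          exact Set.indicator_of_notMem (fun hc => hry ((hmem1 x y).mp hc).1) _
        rw [hfun0, integral_zero]
    have hpos : ∀ y ∈ Ioi lam, exponentialPDFReal (1/ΩY) y *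
          (∫ x, M1.indicator A (x, y) ∂(expMeasure (1/ΩX)))
        = ∫ x in (δ1 * (1 + (PS2 + ρ) * y) / (PS1 * (ρ * y - δ1)))..y,
            (δ1 * (1 + PS1 * x + PS2 * y) / (y * (PS1 * x - δ1))) * fX x * fY y := by
      intro y hy
      rw [mem_Ioi] at hy
      have hy0 : 0 < y := hlam0.trans hy
      have hry : δ1 < ρ * y := lt_trans hδ1lam (by nlinarith)
      have hg1y : g1 y ≤ y := hg1le y hry hy.le
      have hg10 : 0 < g1 y := lt_trans (by positivity) (hg1pos y hry)
      rw [hfun1 y hry, integral_indicator measurableSet_Icc,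
        RelayAux.setIntegral_expMeasure_eq _ hrX _ measurableSet_Icc,
        integral_Icc_eq_integral_Ioc, ← intervalIntegral.integral_of_le hg1y,
        ← intervalIntegral.integral_const_mul]
      have hgr : (δ1 * (1 + (PS2 + ρ) * y) / (PS1 * (ρ * y - δ1))) = g1 y := rfl
      rw [hgr]
      refine intervalIntegral.integral_congr fun x hx => ?_
      rw [uIcc_of_le hg1y] at hx
      have hx0 : (0:ℝ) ≤ x := le_trans hg10.le hx.1
      rw [RelayAux.expPDFReal_eq _ _ hx0, RelayAux.expPDFReal_eq _ _ hy0.le]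
      simp only [hfX, hfY, hAdef]
      rw [show -(1/ΩX * x) = -x/ΩX from by ring, show -(1/ΩY * y) = -y/ΩY from by ring]
      ring
    calc (∫ y, exponentialPDFReal (1/ΩY) y *
          ∫ x, M1.indicator A (x, y) ∂(expMeasure (1/ΩX)))
        = ∫ y, (Ioi lam).indicator (fun y => exponentialPDFReal (1/ΩY) y *
            ∫ x, M1.indicator A (x, y) ∂(expMeasure (1/ΩX))) y := by
          refine integral_congr_ae (Filter.Eventually.of_forall fun y => ?_)
          by_cases h : y ∈ Ioi lam
          · rw [Set.indicator_of_mem h]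
          · rw [Set.indicator_of_notMem h]
            exact mul_eq_zero_of_right _ (hzero y (not_lt.mp (fun hc => h hc)))
      _ = ∫ y in Ioi lam, exponentialPDFReal (1/ΩY) y *
            ∫ x, M1.indicator A (x, y) ∂(expMeasure (1/ΩX)) :=
          integral_indicator measurableSet_Ioi
      _ = ∫ y in Ioi lam, ∫ x in (δ1 * (1 + (PS2 + ρ) * y) / (PS1 * (ρ * y - δ1)))..y,
            (δ1 * (1 + PS1 * x + PS2 * y) / (y * (PS1 * x - δ1))) * fX x * fY y :=
          setIntegral_congr_fun measurableSet_Ioi fun y hy => hpos y hy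
  -- second term
  have hfun2 : ∀ x : ℝ, δ2 < ρ * x → (fun y => M2.indicator B (x, y))
      = (Ico (g2 x) x).indicator (fun y => B (x, y)) := by
    intro x hrx
    funext y
    have hiff : (x, y) ∈ M2 ↔ y ∈ Ico (g2 x) x := by
      rw [hmem2 x y, mem_Ico]
      exact ⟨fun h => ⟨h.2.1, h.2.2⟩, fun h => ⟨hrx, h.1, h.2⟩⟩
    by_cases h : y ∈ Ico (g2 x) x
    · rw [Set.indicator_of_mem (hiff.mpr h), Set.indicator_of_mem h]
    · rw [Set.indicator_of_notMem (fun hc => h (hiff.mp hc)),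
        Set.indicator_of_notMem h]
  have hterm2 : (∫ p, M2.indicator B p ∂((expMeasure (1/ΩX)).prod (expMeasure (1/ΩY))))
      = ∫ x in Ioi lam, ∫ y in (δ2 * (1 + (PS1 + ρ) * x) / (PS2 * (ρ * x - δ2)))..x,
          (δ2 * (1 + PS1 * x + PS2 * y) / (x * (PS2 * y - δ2))) * fX x * fY y := by
    rw [MeasureTheory.integral_prod _ hint2,
      RelayAux.integral_expMeasure_eq _ hrX]
    have hzero : ∀ x : ℝ, x ≤ lam →
        (∫ y, M2.indicator B (x, y) ∂(expMeasure (1/ΩY))) = 0 := by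
      intro x hxlam
      by_cases hrx : δ2 < ρ * x
      · rw [hfun2 x hrx, Ico_eq_empty (not_lt.mpr (hg2ge x hrx hxlam))]
        simp
      · have hfun0 : (fun y => M2.indicator B (x, y)) = fun _ => (0:ℝ) := by
          funext y
          exact Set.indicator_of_notMem (fun hc => hrx ((hmem2 x y).mp hc).1) _
        rw [hfun0, integral_zero]
    have hpos : ∀ x ∈ Ioi lam, exponentialPDFReal (1/ΩX) x *
          (∫ y, M2.indicator B (x, y) ∂(expMeasure (1/ΩY)))
        = ∫ y in (δ2 * (1 + (PS1 + ρ) * x) / (PS2 * (ρ * x - δ2)))..x,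
            (δ2 * (1 + PS1 * x + PS2 * y) / (x * (PS2 * y - δ2))) * fX x * fY y := by
      intro x hx
      rw [mem_Ioi] at hx
      have hx0 : 0 < x := hlam0.trans hx
      have hrx : δ2 < ρ * x := lt_trans hδ2lam (by nlinarith)
      have hg2x : g2 x ≤ x := hg2le x hrx hx.le
      have hg20 : 0 < g2 x := lt_trans (by positivity) (hg2pos x hrx)
      rw [hfun2 x hrx, integral_indicator measurableSet_Ico,
        RelayAux.setIntegral_expMeasure_eq _ hrY _ measurableSet_Ico,
        integral_Ico_eq_integral_Ioo, ← integral_Ioc_eq_integral_Ioo,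
        ← intervalIntegral.integral_of_le hg2x,
        ← intervalIntegral.integral_const_mul]
      have hgr : (δ2 * (1 + (PS1 + ρ) * x) / (PS2 * (ρ * x - δ2))) = g2 x := rfl
      rw [hgr]
      refine intervalIntegral.integral_congr fun y hy => ?_
      rw [uIcc_of_le hg2x] at hy
      have hy0 : (0:ℝ) ≤ y := le_trans hg20.le hy.1
      rw [RelayAux.expPDFReal_eq _ _ hy0, RelayAux.expPDFReal_eq _ _ hx0.le]
      simp only [hfX, hfY, hBdef]
      rw [show -(1/ΩX * x) = -x/ΩX from by ring, show -(1/ΩY * y) = -y/ΩY from by ring]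
      ring
    calc (∫ x, exponentialPDFReal (1/ΩX) x *
          ∫ y, M2.indicator B (x, y) ∂(expMeasure (1/ΩY)))
        = ∫ x, (Ioi lam).indicator (fun x => exponentialPDFReal (1/ΩX) x *
            ∫ y, M2.indicator B (x, y) ∂(expMeasure (1/ΩY))) x := by
          refine integral_congr_ae (Filter.Eventually.of_forall fun x => ?_)
          by_cases h : x ∈ Ioi lam
          · rw [Set.indicator_of_mem h]
          · rw [Set.indicator_of_notMem h]
            exact mul_eq_zero_of_right _ (hzero x (not_lt.mp (fun hc => h hc)))
      _ = ∫ x in Ioi lam, exponentialPDFReal (1/ΩX) x *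
            ∫ y, M2.indicator B (x, y) ∂(expMeasure (1/ΩY)) :=
          integral_indicator measurableSet_Ioi
      _ = ∫ x in Ioi lam, ∫ y in (δ2 * (1 + (PS1 + ρ) * x) / (PS2 * (ρ * x - δ2)))..x,
            (δ2 * (1 + PS1 * x + PS2 * y) / (x * (PS2 * y - δ2))) * fX x * fY y :=
          setIntegral_congr_fun measurableSet_Ioi fun x hx => hpos x hx
  -- assemble
  calc (∫ ω, Set.indicator Mρ
        (fun p => max (δ1 * (1 + PS1 * p.1 + PS2 * p.2) / (p.2 * (PS1 * p.1 - δ1)))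
                      (δ2 * (1 + PS1 * p.1 + PS2 * p.2) / (p.1 * (PS2 * p.2 - δ2))))
        (X ω, Y ω) ∂μ)
      = ∫ p, Mρ.indicator (fun p => max (A p) (B p)) p
          ∂((expMeasure (1/ΩX)).prod (expMeasure (1/ΩY))) := hLHS.symm
    _ = ∫ p, (M1.indicator A p + M2.indicator B p)
          ∂((expMeasure (1/ΩX)).prod (expMeasure (1/ΩY))) :=
        integral_congr_ae (Filter.Eventually.of_forall hsplit)
    _ = (∫ p, M1.indicator A p ∂((expMeasure (1/ΩX)).prod (expMeasure (1/ΩY))))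
        + ∫ p, M2.indicator B p ∂((expMeasure (1/ΩX)).prod (expMeasure (1/ΩY))) :=
        integral_add hint1 hint2
    _ = _ := by rw [hterm1, hterm2]
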